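/- For every positive integer n, the sum over a from 1 to n with gcd(a,n)=1 of gcd(a-1,n) equals φ(n)·σ₀(n), where σ₀(n) is the number of divisors of n. -/

import Mathlib

open Finset

lemma menon_count (n d : ℕ) (hn : 1 < n) (hd : d ∣ n) :
    ((Finset.range n).filter (fun a => Nat.gcd a n = 1 ∧ (a : ZMod d) = 1)).card
      = Nat.totient n / Nat.totient d := by
  haveI : NeZero n := ⟨by omega⟩
  have hdpos : 0 < d := Nat.pos_of_dvd_of_pos hd (by omega)
  haveI : NeZero d := ⟨by omega⟩
  set f := ZMod.unitsMap hd with hf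
  have hker : Nat.card f.ker = n.totient / d.totient := by
    have h1 : Nat.card (ZMod n)ˣ = Nat.card (ZMod d)ˣ * Nat.card f.ker := by
      rw [Subgroup.card_eq_card_quotient_mul_card_subgroup f.ker]
      congr 1
      exact Nat.card_congr
        (QuotientGroup.quotientKerEquivOfSurjective f (ZMod.unitsMap_surjective hd)).toEquiv
    rw [Nat.card_eq_fintype_card, Nat.card_eq_fintype_card, ZMod.card_units_eq_totient,
      ZMod.card_units_eq_totient] at h1
    rw [h1, Nat.mul_div_cancel_left _ (Nat.totient_pos.2 hdpos)]
  rw [← hker, Nat.card_eq_fintype_card]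
  have : Fintype.card f.ker = (univ.filter (fun u : (ZMod n)ˣ => f u = 1)).card := by
    rw [Fintype.card_subtype]
    congr 1
    ext u
    simp [MonoidHom.mem_ker]
  rw [this]
  refine Finset.card_bij' (fun a ha => ZMod.unitOfCoprime a (by
      simp only [mem_filter] at ha; exact ha.2.1))
    (fun u _ => (u : ZMod n).val) ?_ ?_ ?_ ?_
  · intro a ha
    simp only [mem_filter, mem_range] at ha
    simp only [mem_filter, mem_univ, true_and]
    ext
    show (ZMod.castHom hd (ZMod d)) ((ZMod.unitOfCoprime a ha.2.1 : ZMod n)) = 1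
    rw [ZMod.coe_unitOfCoprime, map_natCast]
    exact ha.2.2
  · intro u hu
    simp only [mem_filter, mem_univ, true_and] at hu
    simp only [mem_filter, mem_range]
    refine ⟨ZMod.val_lt _, ZMod.val_coe_unit_coprime u, ?_⟩
    have : ((( u : ZMod n).val : ℕ) : ZMod d) = (ZMod.castHom hd (ZMod d)) (u : ZMod n) := by
      rw [ZMod.natCast_val, ZMod.castHom_apply]
    rw [this]
    exact congrArg Units.val hu
  · intro a ha
    simp only [mem_filter, mem_range] at ha
    simp [ZMod.coe_unitOfCoprime, ZMod.val_natCast_of_lt ha.1]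
  · intro u hu
    ext
    simp [ZMod.coe_unitOfCoprime, ZMod.natCast_val, ZMod.cast_id]

/-- **Menon's identity**: for every positive integer `n`,
`∑_{a=1, gcd(a,n)=1}^{n} gcd(a-1, n) = φ(n) · σ₀(n)`. -/
theorem menon_identity (n : ℕ) (hn : 0 < n) :
    ∑ a ∈ (Finset.Icc 1 n).filter (fun a => Nat.gcd a n = 1), Nat.gcd (a - 1) n =
      Nat.totient n * n.divisors.card := by
  rcases eq_or_lt_of_le (show 1 ≤ n from hn) with h1 | hn1
  · simp [← h1]
  have hn0 : n ≠ 0 := by omega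
  have hset : (Finset.Icc 1 n).filter (fun a => Nat.gcd a n = 1)
      = (Finset.range n).filter (fun a => Nat.gcd a n = 1) := by
    ext a
    simp only [mem_filter, mem_Icc, mem_range]
    constructor
    · rintro ⟨⟨h1, h2⟩, h3⟩
      refine ⟨lt_of_le_of_ne h2 ?_, h3⟩
      rintro rfl
      rw [Nat.gcd_self] at h3; omega
    · rintro ⟨h1, h2⟩
      refine ⟨⟨?_, le_of_lt h1⟩, h2⟩
      rcases Nat.eq_zero_or_pos a with rfl | ha
      · rw [Nat.gcd_zero_left] at h2; omega
      · exact ha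
  rw [hset]
  have hterm : ∀ a ∈ (Finset.range n).filter (fun a => Nat.gcd a n = 1),
      Nat.gcd (a - 1) n = ∑ e ∈ n.divisors.filter (fun e => (a : ZMod e) = 1), Nat.totient e := by
    intro a ha
    simp only [mem_filter, mem_range] at ha
    have ha1 : 1 ≤ a := by
      rcases Nat.eq_zero_or_pos a with rfl | h
      · rw [Nat.gcd_zero_left] at ha; omega
      · exact h
    have hgcd0 : Nat.gcd (a - 1) n ≠ 0 := fun h => hn0 (Nat.eq_zero_of_gcd_eq_zero_right h)
    rw [← Nat.sum_totient (Nat.gcd (a - 1) n)]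
    apply Finset.sum_congr _ (fun _ _ => rfl)
    ext e
    simp only [Nat.mem_divisors, mem_filter, Nat.dvd_gcd_iff]
    constructor
    · rintro ⟨⟨he1, he2⟩, -⟩
      refine ⟨⟨he2, hn0⟩, ?_⟩
      have : a ≡ 1 [MOD e] := ((Nat.modEq_iff_dvd' ha1).2 he1).symm
      calc ((a : ℕ) : ZMod e) = ((1 : ℕ) : ZMod e) := (ZMod.natCast_eq_natCast_iff _ _ _).2 this
        _ = 1 := Nat.cast_one
    · rintro ⟨⟨he2, -⟩, he3⟩
      have : a ≡ 1 [MOD e] := by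
        rw [← Nat.cast_one] at he3
        exact (ZMod.natCast_eq_natCast_iff _ _ _).1 he3
      exact ⟨⟨(Nat.modEq_iff_dvd' ha1).1 this.symm, he2⟩, hgcd0⟩
  rw [Finset.sum_congr rfl hterm,
    Finset.sum_congr rfl (fun a _ => Finset.sum_filter (fun e => (a : ZMod e) = 1) Nat.totient),
    Finset.sum_comm]
  have hinner : ∀ e ∈ n.divisors,
      (∑ a ∈ (Finset.range n).filter (fun a => Nat.gcd a n = 1),
        if (a : ZMod e) = 1 then Nat.totient e else 0) = Nat.totient n := by
    intro e he
    rw [Nat.mem_divisors] at he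
    rw [← Finset.sum_filter, Finset.filter_filter, Finset.sum_const, smul_eq_mul]
    rw [menon_count n e hn1 he.1]
    exact Nat.div_mul_cancel (Nat.totient_dvd_of_dvd he.1)
  rw [Finset.sum_congr rfl hinner, Finset.sum_const, smul_eq_mul, mul_comm]
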